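/- arXiv:2103.03658 — 2 statements merged into one kernel-verified Lean document; each statement's English description precedes it below -/
import Mathlib

section
/- Let α ∈ (0,1) and let u : ℝ² → ℝ be bounded and Lipschitz continuous (with respect to the Euclidean norm). Then for every x ∈ ℝ² the function y ↦ (u(x) − u(y))/|x − y|^{2+α} is Lebesgue integrable on ℝ², the function ξ ↦ (S u(x,ξ) − 4u(x))/|ξ|^{2+α} is Lebesgue integrable on [0,∞)², and ∫_{ℝ²} (u(x) − u(y))/|x − y|^{2+α} dy = − ∫_{[0,∞)²} (S u(x,ξ) − 4u(x)) |ξ|^{−(2+α)} dξ. -/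
open MeasureTheory Set Metric

/-- A point of `ℝ²` (with the Euclidean norm) built from two coordinates. -/
noncomputable def euclPt (a b : ℝ) : EuclideanSpace ℝ (Fin 2) :=
  (WithLp.equiv 2 (Fin 2 → ℝ)).symm ![a, b]

/-- The symmetrized four-point sum
`S u (x, ξ) = Σ_{(m₁,m₂) ∈ {0,1}²} u (x₁ + (−1)^{m₁} ξ₁, x₂ + (−1)^{m₂} ξ₂)`. -/
noncomputable def symmSum (u : EuclideanSpace ℝ (Fin 2) → ℝ)
    (x ξ : EuclideanSpace ℝ (Fin 2)) : ℝ :=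
  u (euclPt (x 0 + ξ 0) (x 1 + ξ 1)) + u (euclPt (x 0 + ξ 0) (x 1 - ξ 1)) +
    u (euclPt (x 0 - ξ 0) (x 1 + ξ 1)) + u (euclPt (x 0 - ξ 0) (x 1 - ξ 1))

namespace Stmt1Aux

local notation "E2" => EuclideanSpace ℝ (Fin 2)

/-- Integrability of `‖ξ‖ ^ (-s)` near the origin in the plane, for `0 ≤ s < 2`. -/
lemma integrableOn_rpow_ball {s : ℝ} (h0 : 0 ≤ s) (h2 : s < 2) :
    IntegrableOn (fun ξ : E2 => ‖ξ‖ ^ (-s)) (ball 0 1) volume := by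
  constructor
  · exact Measurable.aestronglyMeasurable (by fun_prop)
  rw [hasFiniteIntegral_iff_ofReal
    (ae_of_all _ fun ξ => Real.rpow_nonneg (norm_nonneg _) _)]
  set q : ℝ := 2⁻¹ with hqdef
  have hq0 : (0:ℝ) < q := by norm_num
  have hq1 : q < 1 := by norm_num
  set S : ℕ → Set (E2) := fun n => {ξ : E2 | q ^ (n+1) ≤ ‖ξ‖ ∧ ‖ξ‖ < q ^ n} with hSdef
  have hSm : ∀ n, MeasurableSet (S n) := fun n =>
    (measurableSet_le measurable_const measurable_norm).inter
      (measurableSet_lt measurable_norm measurable_const)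
  have hcover : ball (0:E2) 1 ⊆ {0} ∪ ⋃ n, S n := by
    intro ξ hξ
    rcases eq_or_ne ξ 0 with rfl | hne
    · exact Or.inl rfl
    refine Or.inr (mem_iUnion.2 ?_)
    have hpos : 0 < ‖ξ‖ := norm_pos_iff.2 hne
    have hlt1 : ‖ξ‖ < 1 := by simpa using hξ
    have hex : ∃ n, q ^ (n+1) ≤ ‖ξ‖ := by
      obtain ⟨n, hn⟩ := exists_pow_lt_of_lt_one hpos hq1
      exact ⟨n, le_of_lt (lt_of_le_of_lt
        (pow_le_pow_of_le_one hq0.le hq1.le (Nat.le_succ n)) hn)⟩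
    classical
    refine ⟨Nat.find hex, Nat.find_spec hex, ?_⟩
    rcases Nat.eq_zero_or_pos (Nat.find hex) with hn0 | hn0
    · rw [hn0]; simpa using hlt1
    · have hmin := Nat.find_min hex (Nat.pred_lt hn0.ne')
      have hlt : ‖ξ‖ < q ^ (Nat.find hex - 1 + 1) := lt_of_not_ge hmin
      have heq : Nat.find hex - 1 + 1 = Nat.find hex := by omega
      rwa [heq] at hlt
  set V := volume (ball (0:E2) 1) with hVdef
  have hVlt : V < ⊤ := measure_ball_lt_top
  have hterm : ∀ n, ∫⁻ ξ in S n, ENNReal.ofReal (‖ξ‖ ^ (-s)) ≤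
      ENNReal.ofReal ((q ^ (n+1)) ^ (-s) * (q ^ n) ^ 2) * V := by
    intro n
    have h1 : ∫⁻ ξ in S n, ENNReal.ofReal (‖ξ‖ ^ (-s)) ≤
        ∫⁻ _ in S n, ENNReal.ofReal ((q ^ (n+1)) ^ (-s)) := by
      refine setLIntegral_mono' (hSm n) fun ξ hξ => ?_
      exact ENNReal.ofReal_le_ofReal
        (Real.rpow_le_rpow_of_nonpos (pow_pos hq0 _) hξ.1 (neg_nonpos.2 h0))
    have h2' : volume (S n) ≤ ENNReal.ofReal ((q ^ n) ^ 2) * V := by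
      have hsub : S n ⊆ ball (0:E2) (q ^ n) := fun ξ hξ => by
        simpa [mem_ball_zero_iff] using hξ.2
      refine (measure_mono hsub).trans_eq ?_
      rw [Measure.addHaar_ball volume (0:E2) (pow_nonneg hq0.le n),
        finrank_euclideanSpace_fin, hVdef]
    calc ∫⁻ ξ in S n, ENNReal.ofReal (‖ξ‖ ^ (-s))
        ≤ ∫⁻ _ in S n, ENNReal.ofReal ((q ^ (n+1)) ^ (-s)) := h1
      _ = ENNReal.ofReal ((q ^ (n+1)) ^ (-s)) * volume (S n) := setLIntegral_const _ _
      _ ≤ ENNReal.ofReal ((q ^ (n+1)) ^ (-s)) * (ENNReal.ofReal ((q ^ n) ^ 2) * V) := by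
          gcongr
      _ = ENNReal.ofReal ((q ^ (n+1)) ^ (-s) * (q ^ n) ^ 2) * V := by
          rw [← mul_assoc, ← ENNReal.ofReal_mul (Real.rpow_nonneg (pow_nonneg hq0.le _) _)]
  have hco : ∀ n : ℕ, (q ^ (n+1)) ^ (-s) * (q ^ n) ^ 2 = q ^ (-s) * (q ^ (2 - s)) ^ n := by
    intro n
    have e1 : ((q:ℝ) ^ (n+1)) ^ (-s) = q ^ (((n:ℝ)+1) * (-s)) := by
      rw [← Real.rpow_natCast q (n+1), ← Real.rpow_mul hq0.le]
      push_cast; ring_nf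
    have e2 : ((q:ℝ) ^ n) ^ 2 = q ^ ((n:ℝ) * 2) := by
      rw [← Real.rpow_natCast q n, ← Real.rpow_natCast (q ^ ((n:ℝ))) 2,
        ← Real.rpow_mul hq0.le]
      norm_num
    have e3 : ((q:ℝ) ^ (2 - s)) ^ n = q ^ ((2 - s) * (n:ℝ)) := by
      rw [← Real.rpow_natCast (q ^ (2 - s)) n, ← Real.rpow_mul hq0.le]
    rw [e1, e2, e3, ← Real.rpow_add hq0, ← Real.rpow_add hq0]
    congr 1
    ring
  have hsummable : Summable fun n : ℕ => q ^ (-s) * (q ^ (2 - s)) ^ n := by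
    refine Summable.mul_left _ ?_
    exact summable_geometric_of_lt_one (Real.rpow_nonneg hq0.le _)
      (Real.rpow_lt_one hq0.le hq1 (by linarith))
  calc ∫⁻ ξ in ball (0:E2) 1, ENNReal.ofReal (‖ξ‖ ^ (-s))
      ≤ ∫⁻ ξ in ({0} ∪ ⋃ n, S n : Set E2), ENNReal.ofReal (‖ξ‖ ^ (-s)) :=
        lintegral_mono_set hcover
    _ ≤ (∫⁻ ξ in ({0} : Set E2), ENNReal.ofReal (‖ξ‖ ^ (-s))) +
        ∫⁻ ξ in (⋃ n, S n : Set E2), ENNReal.ofReal (‖ξ‖ ^ (-s)) :=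
        lintegral_union_le _ _ _
    _ ≤ 0 + ∑' n, ∫⁻ ξ in S n, ENNReal.ofReal (‖ξ‖ ^ (-s)) := by
        gcongr
        · have h0' : volume ({(0:E2)} : Set E2) = 0 := measure_singleton 0
          rw [Measure.restrict_eq_zero.2 h0', lintegral_zero_measure]
        · exact lintegral_iUnion_le _ _
    _ ≤ 0 + ∑' n, ENNReal.ofReal ((q ^ (n+1)) ^ (-s) * (q ^ n) ^ 2) * V := by
        gcongr with n
        exact hterm n
    _ = (∑' n, ENNReal.ofReal (q ^ (-s) * (q ^ (2 - s)) ^ n)) * V := by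
        rw [zero_add, ← ENNReal.tsum_mul_right]
        congr 1; funext n; rw [hco n]
    _ = ENNReal.ofReal (∑' n : ℕ, q ^ (-s) * (q ^ (2 - s)) ^ n) * V := by
        rw [ENNReal.ofReal_tsum_of_nonneg (fun n => by positivity) hsummable]
    _ < ⊤ := ENNReal.mul_lt_top ENNReal.ofReal_lt_top hVlt

/-- Integrability of `‖ξ‖ ^ (-c)` outside the unit ball in the plane, for `c > 2`. -/
lemma integrableOn_rpow_compl {c : ℝ} (hc : 2 < c) :
    IntegrableOn (fun ξ : E2 => ‖ξ‖ ^ (-c)) (ball (0:E2) 1)ᶜ volume := by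
  have hc0 : (0:ℝ) < c := by linarith
  have hint : Integrable (fun ξ : E2 => (1 + ‖ξ‖) ^ (-c)) volume := by
    apply integrable_one_add_norm (E := E2)
    rw [finrank_euclideanSpace_fin]; exact_mod_cast hc
  refine Integrable.mono' ((hint.const_mul ((2:ℝ) ^ c)).integrableOn)
    (Measurable.aestronglyMeasurable (by fun_prop)) ?_
  refine (ae_restrict_iff' measurableSet_ball.compl).2 (ae_of_all _ fun ξ hξ => ?_)
  have h1 : (1:ℝ) ≤ ‖ξ‖ := by
    by_contra h
    exact hξ (by simpa [mem_ball_zero_iff] using lt_of_not_ge h)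
  have hnn : (0:ℝ) ≤ ‖ξ‖ ^ (-c) := Real.rpow_nonneg (norm_nonneg _) _
  rw [Real.norm_eq_abs, abs_of_nonneg hnn]
  have h2 : (1 + ‖ξ‖) / 2 ≤ ‖ξ‖ := by linarith
  have h3 : ‖ξ‖ ^ (-c) ≤ ((1 + ‖ξ‖) / 2) ^ (-c) :=
    Real.rpow_le_rpow_of_nonpos (by positivity) h2 (neg_nonpos.2 hc0.le)
  refine h3.trans_eq ?_
  rw [Real.div_rpow (by positivity) (by norm_num), Real.rpow_neg (by norm_num : (0:ℝ) ≤ 2),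
    div_eq_mul_inv, inv_inv, mul_comm]

/-- The master integrable function. -/
lemma integrable_master {α B : ℝ} {K : NNReal} (hα : α ∈ Set.Ioo (0:ℝ) 1)
    (u : E2 → ℝ) (hB : ∀ y, |u y| ≤ B) (hK : LipschitzWith K u) (x : E2) :
    Integrable (fun ξ : E2 => (u x - u (x + ξ)) * ‖ξ‖ ^ (-(2+α))) volume := by
  obtain ⟨hα0, hα1⟩ := hα
  have hcont : Continuous u := hK.continuous
  have hmeas : AEStronglyMeasurable
      (fun ξ : E2 => (u x - u (x + ξ)) * ‖ξ‖ ^ (-(2+α))) volume := by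
    apply Measurable.aestronglyMeasurable
    apply Measurable.mul
    · exact (continuous_const.sub (hcont.comp (continuous_const.add continuous_id))).measurable
    · fun_prop
  rw [← integrableOn_univ, ← union_compl_self (ball (0:E2) 1)]
  apply IntegrableOn.union
  · -- near the origin
    refine Integrable.mono' (((integrableOn_rpow_ball
        (by linarith : (0:ℝ) ≤ 1 + α) (by linarith)).const_mul (K:ℝ)))
      hmeas.restrict (ae_of_all _ fun ξ => ?_)
    have hd : |u x - u (x + ξ)| ≤ (K:ℝ) * ‖ξ‖ := by
      have := hK.dist_le_mul x (x + ξ)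
      rw [Real.dist_eq] at this
      simpa [dist_eq_norm, norm_neg] using this
    have hnn : (0:ℝ) ≤ ‖ξ‖ ^ (-(2+α)) := Real.rpow_nonneg (norm_nonneg _) _
    rw [Real.norm_eq_abs, abs_mul, abs_of_nonneg hnn]
    calc |u x - u (x + ξ)| * ‖ξ‖ ^ (-(2+α)) ≤ ((K:ℝ) * ‖ξ‖) * ‖ξ‖ ^ (-(2+α)) := by
          gcongr
      _ = (K:ℝ) * (‖ξ‖ * ‖ξ‖ ^ (-(2+α))) := by ring
      _ = (K:ℝ) * ‖ξ‖ ^ (-(1+α)) := by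
          congr 1
          rcases eq_or_ne ξ 0 with rfl | hne
          · rw [norm_zero, Real.zero_rpow (by linarith), Real.zero_rpow (by linarith),
              zero_mul]
          · have hpos : 0 < ‖ξ‖ := norm_pos_iff.2 hne
            nth_rewrite 1 [← Real.rpow_one ‖ξ‖]
            rw [← Real.rpow_add hpos]
            congr 1
            ring
  · -- away from the origin
    refine Integrable.mono' (((integrableOn_rpow_compl
        (by linarith : (2:ℝ) < 2 + α)).const_mul (2*B)))
      hmeas.restrict (ae_of_all _ fun ξ => ?_)
    have hnn : (0:ℝ) ≤ ‖ξ‖ ^ (-(2+α)) := Real.rpow_nonneg (norm_nonneg _) _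
    rw [Real.norm_eq_abs, abs_mul, abs_of_nonneg hnn]
    gcongr
    calc |u x - u (x + ξ)| ≤ |u x| + |u (x + ξ)| := abs_sub _ _
      _ ≤ B + B := add_le_add (hB x) (hB (x + ξ))
      _ = 2 * B := by ring

/-- Reflection in one coordinate, or the identity. -/
noncomputable def sgn1 (b : Bool) : ℝ ≃ₗᵢ[ℝ] ℝ :=
  cond b (LinearIsometryEquiv.neg ℝ) (LinearIsometryEquiv.refl ℝ ℝ)

@[simp] lemma sgn1_ff (r : ℝ) : sgn1 false r = r := rfl
@[simp] lemma sgn1_tt (r : ℝ) : sgn1 true r = -r := rfl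

/-- Reflection of the plane in the coordinate axes. -/
noncomputable def qRefl (b0 b1 : Bool) : E2 ≃ₗᵢ[ℝ] E2 :=
  LinearIsometryEquiv.piLpCongrRight 2 (fun i : Fin 2 => sgn1 (![b0, b1] i))

@[simp] lemma qRefl_apply_zero (b0 b1 : Bool) (ξ : E2) :
    qRefl b0 b1 ξ 0 = sgn1 b0 (ξ 0) := rfl

@[simp] lemma qRefl_apply_one (b0 b1 : Bool) (ξ : E2) :
    qRefl b0 b1 ξ 1 = sgn1 b1 (ξ 1) := rfl


@[simp] lemma euclPt_zero (a b : ℝ) : euclPt a b 0 = a := rfl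
@[simp] lemma euclPt_one (a b : ℝ) : euclPt a b 1 = b := rfl

lemma add_apply (x v : E2) (i : Fin 2) : (x + v) i = x i + v i := rfl

lemma add_qRefl_ff_ff (x ξ : E2) :
    x + qRefl false false ξ = euclPt (x 0 + ξ 0) (x 1 + ξ 1) := by
  ext i; fin_cases i <;> rfl

lemma add_qRefl_ff_tt (x ξ : E2) :
    x + qRefl false true ξ = euclPt (x 0 + ξ 0) (x 1 - ξ 1) := by
  ext i; fin_cases i
  · rfl
  · show x 1 + -(ξ 1) = x 1 - ξ 1
    ring

lemma add_qRefl_tt_ff (x ξ : E2) :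
    x + qRefl true false ξ = euclPt (x 0 - ξ 0) (x 1 + ξ 1) := by
  ext i; fin_cases i
  · show x 0 + -(ξ 0) = x 0 - ξ 0
    ring
  · rfl

lemma add_qRefl_tt_tt (x ξ : E2) :
    x + qRefl true true ξ = euclPt (x 0 - ξ 0) (x 1 - ξ 1) := by
  ext i; fin_cases i
  · show x 0 + -(ξ 0) = x 0 - ξ 0
    ring
  · show x 1 + -(ξ 1) = x 1 - ξ 1
    ring

/-- The four-fold pointwise symmetrization identity. -/
lemma four_sum (u : E2 → ℝ) (x ξ : E2) (c : ℝ) :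
    (u x - u (x + qRefl false false ξ)) * ‖qRefl false false ξ‖ ^ c
      + (u x - u (x + qRefl false true ξ)) * ‖qRefl false true ξ‖ ^ c
      + (u x - u (x + qRefl true false ξ)) * ‖qRefl true false ξ‖ ^ c
      + (u x - u (x + qRefl true true ξ)) * ‖qRefl true true ξ‖ ^ c
    = (4 * u x - symmSum u x ξ) * ‖ξ‖ ^ c := by
  have hn : ∀ b0 b1 : Bool, ‖qRefl b0 b1 ξ‖ = ‖ξ‖ := fun b0 b1 =>
    (qRefl b0 b1).norm_map ξ
  rw [hn, hn, hn, hn, add_qRefl_ff_ff, add_qRefl_ff_tt, add_qRefl_tt_ff, add_qRefl_tt_tt,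
    symmSum]
  ring

abbrev Qo : Set E2 := {ξ : E2 | 0 < ξ 0 ∧ 0 < ξ 1}
abbrev T2 : Set E2 := {ξ : E2 | 0 < ξ 0 ∧ ξ 1 < 0}
abbrev T3 : Set E2 := {ξ : E2 | ξ 0 < 0 ∧ 0 < ξ 1}
abbrev T4 : Set E2 := {ξ : E2 | ξ 0 < 0 ∧ ξ 1 < 0}

lemma measurable_coord (i : Fin 2) : Measurable fun ξ : E2 => ξ i :=
  (EuclideanSpace.proj (𝕜 := ℝ) i).continuous.measurable

lemma measurableSet_Qo : MeasurableSet Qo :=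
  (measurableSet_lt measurable_const (measurable_coord 0)).inter
    (measurableSet_lt measurable_const (measurable_coord 1))
lemma measurableSet_T2 : MeasurableSet T2 :=
  (measurableSet_lt measurable_const (measurable_coord 0)).inter
    (measurableSet_lt (measurable_coord 1) measurable_const)
lemma measurableSet_T3 : MeasurableSet T3 :=
  (measurableSet_lt (measurable_coord 0) measurable_const).inter
    (measurableSet_lt measurable_const (measurable_coord 1))
lemma measurableSet_T4 : MeasurableSet T4 :=
  (measurableSet_lt (measurable_coord 0) measurable_const).inter
    (measurableSet_lt (measurable_coord 1) measurable_const)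

lemma null_coord (i : Fin 2) : volume {ξ : E2 | ξ i = 0} = 0 := by
  have hker : {ξ : E2 | ξ i = 0} =
      ((LinearMap.ker (EuclideanSpace.proj (𝕜 := ℝ) i : E2 →ₗ[ℝ] ℝ) : Submodule ℝ E2) : Set E2) := by
    ext ξ
    simp [LinearMap.mem_ker, PiLp.proj_apply]
  rw [hker]
  apply Measure.addHaar_submodule
  intro htop
  have h1 : euclPt 1 1 ∈ LinearMap.ker (EuclideanSpace.proj (𝕜 := ℝ) i : E2 →ₗ[ℝ] ℝ) := by
    rw [htop]; trivial
  have h2 : euclPt 1 1 i = 0 := h1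
  have h3 : euclPt 1 1 i = 1 := by fin_cases i <;> rfl
  rw [h3] at h2
  exact one_ne_zero h2

lemma null_N : volume ({ξ : E2 | ξ 0 = 0} ∪ {ξ : E2 | ξ 1 = 0}) = 0 :=
  measure_union_null (null_coord 0) (null_coord 1)

lemma hp1 : qRefl false false ⁻¹' Qo = Qo := by
  ext ξ; simp [Set.mem_preimage]
lemma hp2 : qRefl false true ⁻¹' T2 = Qo := by
  ext ξ; simp [Set.mem_preimage, neg_lt_zero]
lemma hp3 : qRefl true false ⁻¹' T3 = Qo := by
  ext ξ; simp [Set.mem_preimage, neg_lt_zero]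
lemma hp4 : qRefl true true ⁻¹' T4 = Qo := by
  ext ξ; simp [Set.mem_preimage, neg_lt_zero]

lemma ae_nmem_N : ∀ᵐ ξ : E2 ∂volume, ¬(ξ 0 = 0 ∨ ξ 1 = 0) := by
  have h := measure_eq_zero_iff_ae_notMem.mp null_N
  filter_upwards [h] with ξ hξ
  simpa [Set.mem_union] using hξ

lemma hQc_ae : Qo =ᵐ[volume] ({ξ : E2 | 0 ≤ ξ 0 ∧ 0 ≤ ξ 1} : Set E2) := by
  rw [Filter.eventuallyEq_set]
  filter_upwards [ae_nmem_N] with ξ hξ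
  push_neg at hξ
  constructor
  · rintro ⟨h1, h2⟩; exact ⟨h1.le, h2.le⟩
  · rintro ⟨h1, h2⟩
    exact ⟨lt_of_le_of_ne h1 (Ne.symm hξ.1), lt_of_le_of_ne h2 (Ne.symm hξ.2)⟩

lemma hU_ae : (Set.univ : Set E2) =ᵐ[volume] ((Qo ∪ T2 ∪ T3 ∪ T4 : Set E2)) := by
  rw [Filter.eventuallyEq_set]
  filter_upwards [ae_nmem_N] with ξ hξ
  push_neg at hξ
  simp only [Set.mem_univ, true_iff, Set.mem_union, Set.mem_setOf_eq]
  rcases lt_trichotomy (ξ 0) 0 with h0 | h0 | h0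
  · rcases lt_trichotomy (ξ 1) 0 with h1 | h1 | h1
    · exact Or.inr ⟨h0, h1⟩
    · exact absurd h1 hξ.2
    · exact Or.inl (Or.inr ⟨h0, h1⟩)
  · exact absurd h0 hξ.1
  · rcases lt_trichotomy (ξ 1) 0 with h1 | h1 | h1
    · exact Or.inl (Or.inl (Or.inr ⟨h0, h1⟩))
    · exact absurd h1 hξ.2
    · exact Or.inl (Or.inl (Or.inl ⟨h0, h1⟩))

end Stmt1Aux

open Stmt1Aux

/-- For `α ∈ (0,1)` and `u : ℝ² → ℝ` bounded and Lipschitz (Euclidean norm), for every `x`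
the function `y ↦ (u x − u y)/‖x − y‖^(2+α)` is integrable on `ℝ²`, the function
`ξ ↦ (S u(x,ξ) − 4 u x)/‖ξ‖^(2+α)` is integrable on `[0,∞)²`, and the two integrals
agree up to a sign. -/
theorem stmt1 (α : ℝ) (hα : α ∈ Set.Ioo (0:ℝ) 1) (u : EuclideanSpace ℝ (Fin 2) → ℝ)
    (hbd : ∃ B : ℝ, ∀ x, |u x| ≤ B) (hlip : ∃ K : NNReal, LipschitzWith K u)
    (x : EuclideanSpace ℝ (Fin 2)) :
    Integrable (fun y : EuclideanSpace ℝ (Fin 2) => (u x - u y) / ‖x - y‖ ^ (2 + α)) volume ∧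
    IntegrableOn (fun ξ : EuclideanSpace ℝ (Fin 2) =>
        (symmSum u x ξ - 4 * u x) / ‖ξ‖ ^ (2 + α))
      {ξ : EuclideanSpace ℝ (Fin 2) | 0 ≤ ξ 0 ∧ 0 ≤ ξ 1} volume ∧
    (∫ y : EuclideanSpace ℝ (Fin 2), (u x - u y) / ‖x - y‖ ^ (2 + α)) =
      - ∫ ξ in {ξ : EuclideanSpace ℝ (Fin 2) | 0 ≤ ξ 0 ∧ 0 ≤ ξ 1},
          (symmSum u x ξ - 4 * u x) * ‖ξ‖ ^ (-(2 + α)) := by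
  obtain ⟨B, hB⟩ := hbd
  obtain ⟨K, hK⟩ := hlip
  set g : EuclideanSpace ℝ (Fin 2) → ℝ :=
    fun ξ => (u x - u (x + ξ)) * ‖ξ‖ ^ (-(2+α)) with hgdef
  have hg : Integrable g volume := integrable_master hα u hB hK x
  -- Conjunct 1
  have hFg : (fun y : EuclideanSpace ℝ (Fin 2) => (u x - u y) / ‖x - y‖ ^ (2 + α)) =
      fun y => g (y - x) := by
    funext y
    show (u x - u y) / ‖x - y‖ ^ (2 + α)
      = (u x - u (x + (y - x))) * ‖y - x‖ ^ (-(2+α))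
    have h1 : x + (y - x) = y := by abel
    rw [h1, norm_sub_rev x y, Real.rpow_neg (norm_nonneg _), ← div_eq_mul_inv]
  have hconj1 : Integrable
      (fun y : EuclideanSpace ℝ (Fin 2) => (u x - u y) / ‖x - y‖ ^ (2 + α)) volume := by
    rw [hFg]; exact hg.comp_sub_right x
  -- Composition with reflections
  have hcomp : ∀ b0 b1 : Bool, Integrable (fun ξ => g (qRefl b0 b1 ξ)) volume := by
    intro b0 b1
    exact ((qRefl b0 b1).measurePreserving.integrable_comp_emb
      (qRefl b0 b1).toHomeomorph.measurableEmbedding).2 hg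
  -- pointwise identity
  have hpt : ∀ ξ, g (qRefl false false ξ) + g (qRefl false true ξ)
      + g (qRefl true false ξ) + g (qRefl true true ξ)
      = (4 * u x - symmSum u x ξ) * ‖ξ‖ ^ (-(2+α)) := fun ξ => four_sum u x ξ _
  have hfun4 : (fun ξ => g (qRefl false false ξ) + g (qRefl false true ξ)
      + g (qRefl true false ξ) + g (qRefl true true ξ))
      = fun ξ => (4 * u x - symmSum u x ξ) * ‖ξ‖ ^ (-(2+α)) := funext hpt
  have hsym : Integrable
      (fun ξ : EuclideanSpace ℝ (Fin 2) =>
        (4 * u x - symmSum u x ξ) * ‖ξ‖ ^ (-(2+α))) volume := by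
    rw [← hfun4]
    exact (((hcomp false false).add (hcomp false true)).add (hcomp true false)).add
      (hcomp true true)
  -- Conjunct 2
  have hf2 : (fun ξ : EuclideanSpace ℝ (Fin 2) =>
        (symmSum u x ξ - 4 * u x) / ‖ξ‖ ^ (2 + α))
      = fun ξ => -((4 * u x - symmSum u x ξ) * ‖ξ‖ ^ (-(2+α))) := by
    funext ξ
    rw [Real.rpow_neg (norm_nonneg _), div_eq_mul_inv]
    ring
  have hconj2 : IntegrableOn
      (fun ξ : EuclideanSpace ℝ (Fin 2) => (symmSum u x ξ - 4 * u x) / ‖ξ‖ ^ (2 + α))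
      {ξ : EuclideanSpace ℝ (Fin 2) | 0 ≤ ξ 0 ∧ 0 ≤ ξ 1} volume := by
    rw [hf2]
    exact hsym.neg.integrableOn
  refine ⟨hconj1, hconj2, ?_⟩
  -- Conjunct 3
  have hstep1 : (∫ y : EuclideanSpace ℝ (Fin 2), (u x - u y) / ‖x - y‖ ^ (2 + α))
      = ∫ ξ, g ξ := by
    rw [hFg]
    exact integral_sub_right_eq_self g x
  -- decompose into quadrants
  have hd12 : Disjoint Qo T2 := by
    rw [Set.disjoint_left]
    rintro ξ ⟨_, h1⟩ ⟨_, h2⟩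
    exact lt_asymm h1 h2
  have hd13 : Disjoint (Qo ∪ T2) T3 := by
    rw [Set.disjoint_left]
    rintro ξ (⟨h1, _⟩ | ⟨h1, _⟩) ⟨h2, _⟩ <;> exact lt_asymm h1 h2
  have hd14 : Disjoint (Qo ∪ T2 ∪ T3) T4 := by
    rw [Set.disjoint_left]
    rintro ξ ((⟨h1, _⟩ | ⟨h1, _⟩) | ⟨_, h1⟩) ⟨h2, h3⟩
    · exact lt_asymm h1 h2
    · exact lt_asymm h1 h2
    · exact lt_asymm h1 h3
  have hdecomp : ∫ ξ, g ξ = (∫ ξ in Qo, g ξ) + (∫ ξ in T2, g ξ)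
      + (∫ ξ in T3, g ξ) + (∫ ξ in T4, g ξ) := by
    rw [← setIntegral_univ, setIntegral_congr_set hU_ae,
      setIntegral_union hd14 measurableSet_T4
        (hg.integrableOn) (hg.integrableOn),
      setIntegral_union hd13 measurableSet_T3
        (hg.integrableOn) (hg.integrableOn),
      setIntegral_union hd12 measurableSet_T2
        (hg.integrableOn) (hg.integrableOn)]
  have htrans : ∀ (b0 b1 : Bool) (T : Set (EuclideanSpace ℝ (Fin 2))),
      (qRefl b0 b1) ⁻¹' T = Qo →
      ∫ ξ in T, g ξ = ∫ ξ in Qo, g (qRefl b0 b1 ξ) := by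
    intro b0 b1 T hpre
    rw [← (qRefl b0 b1).measurePreserving.setIntegral_preimage_emb
      (qRefl b0 b1).toHomeomorph.measurableEmbedding g T, hpre]
  have ht1 := htrans false false Qo hp1
  have ht2 := htrans false true T2 hp2
  have ht3 := htrans true false T3 hp3
  have ht4 := htrans true true T4 hp4
  have hadd : (∫ ξ in Qo, g (qRefl false false ξ)) + (∫ ξ in Qo, g (qRefl false true ξ))
      + (∫ ξ in Qo, g (qRefl true false ξ)) + (∫ ξ in Qo, g (qRefl true true ξ))
      = ∫ ξ in Qo, (g (qRefl false false ξ) + g (qRefl false true ξ)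
        + g (qRefl true false ξ) + g (qRefl true true ξ)) := by
    have hA : Integrable (fun ξ => g (qRefl false false ξ) + g (qRefl false true ξ))
        (volume.restrict Qo) :=
      ((hcomp false false).integrableOn).add ((hcomp false true).integrableOn)
    have hB2 : Integrable (fun ξ => g (qRefl false false ξ) + g (qRefl false true ξ)
        + g (qRefl true false ξ)) (volume.restrict Qo) :=
      hA.add ((hcomp true false).integrableOn)
    rw [← integral_add ((hcomp false false).integrableOn) ((hcomp false true).integrableOn),
      ← integral_add hA ((hcomp true false).integrableOn),
      ← integral_add hB2 ((hcomp true true).integrableOn)]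
  calc (∫ y : EuclideanSpace ℝ (Fin 2), (u x - u y) / ‖x - y‖ ^ (2 + α))
      = ∫ ξ, g ξ := hstep1
    _ = (∫ ξ in Qo, g ξ) + (∫ ξ in T2, g ξ) + (∫ ξ in T3, g ξ) + (∫ ξ in T4, g ξ) := hdecomp
    _ = ∫ ξ in Qo, (g (qRefl false false ξ) + g (qRefl false true ξ)
        + g (qRefl true false ξ) + g (qRefl true true ξ)) := by
        rw [ht1, ht2, ht3, ht4, hadd]
    _ = ∫ ξ in Qo, (4 * u x - symmSum u x ξ) * ‖ξ‖ ^ (-(2+α)) := by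
        exact integral_congr_ae (ae_of_all _ hpt)
    _ = ∫ ξ in {ξ : EuclideanSpace ℝ (Fin 2) | 0 ≤ ξ 0 ∧ 0 ≤ ξ 1},
          (4 * u x - symmSum u x ξ) * ‖ξ‖ ^ (-(2+α)) := setIntegral_congr_set hQc_ae
    _ = - ∫ ξ in {ξ : EuclideanSpace ℝ (Fin 2) | 0 ≤ ξ 0 ∧ 0 ≤ ξ 1},
          (symmSum u x ξ - 4 * u x) * ‖ξ‖ ^ (-(2 + α)) := by
        rw [← integral_neg]
        apply integral_congr_ae (ae_of_all _ fun ξ => ?_)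
        ring
end

section
/- Let α ∈ (0,2), L > 0, c > 0, and let N ≥ 3 be an integer. Let a₁, …, a_N be positive real numbers and define a₀ = −2(Σ_{j=1}^N a_j + 1/(α L^α)). Then the (N−1) × (N−1) real symmetric Toeplitz matrix A with entries A_{ij} = −c · a_{|i−j|} (1 ≤ i, j ≤ N−1, with a₀ on the diagonal) is positive definite. -/
open Matrix

/-- Let `α ∈ (0,2)`, `L > 0`, `c > 0`, `N ≥ 3`, and let `a₁,…,a_N > 0` with
`a₀ = −2(Σ_{j=1}^N a_j + 1/(αL^α))`. Then the `(N−1)×(N−1)` symmetric Toeplitz matrix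
with entries `A_{ij} = −c·a_{|i−j|}` is positive definite. -/
theorem stmt13 (α L c : ℝ) (hα : α ∈ Set.Ioo (0:ℝ) 2) (hL : 0 < L) (hc : 0 < c)
    (N : ℕ) (hN : 3 ≤ N) (a : ℕ → ℝ)
    (hpos : ∀ j : ℕ, 1 ≤ j → j ≤ N → 0 < a j)
    (ha0 : a 0 = -2 * ((∑ j ∈ Finset.Icc 1 N, a j) + 1 / (α * L ^ α))) :
    (Matrix.of fun i j : Fin (N - 1) =>
      -c * a ((i.val : ℤ) - (j.val : ℤ)).natAbs).PosDef := by
  obtain ⟨hα0, hα2⟩ := hα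
  set M : Matrix (Fin (N - 1)) (Fin (N - 1)) ℝ :=
    Matrix.of fun i j : Fin (N - 1) => -c * a ((i.val : ℤ) - (j.val : ℤ)).natAbs with hMdef
  have hMsymm : ∀ i j, M i j = M j i := by
    intro i j
    simp only [hMdef, Matrix.of_apply]
    have h : ((i.val : ℤ) - (j.val : ℤ)).natAbs = ((j.val : ℤ) - (i.val : ℤ)).natAbs := by
      omega
    rw [h]
  have hLα : 0 < α * L ^ α := by positivity
  have hinv : 0 < 1 / (α * L ^ α) := by positivity
  set S : ℝ := ∑ j ∈ Finset.Icc 1 N, a j with hSdef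
  have hanonneg : ∀ k ∈ Finset.Icc 1 N, 0 ≤ a k := by
    intro k hk
    rw [Finset.mem_Icc] at hk
    exact (hpos k hk.1 hk.2).le
  -- Bound on the off-diagonal row sums
  have hoff : ∀ i : Fin (N - 1),
      ∑ j ∈ Finset.univ.erase i, a ((i.val : ℤ) - (j.val : ℤ)).natAbs ≤ 2 * S := by
    intro i
    have hi : i.val < N - 1 := i.isLt
    set f : Fin (N - 1) → ℕ := fun j => ((i.val : ℤ) - (j.val : ℤ)).natAbs with hf
    set s₁ : Finset (Fin (N - 1)) := Finset.univ.filter (fun j => j.val < i.val) with hs1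
    set s₂ : Finset (Fin (N - 1)) := Finset.univ.filter (fun j => i.val < j.val) with hs2
    have hsplit : Finset.univ.erase i = s₁ ∪ s₂ := by
      ext j
      simp only [hs1, hs2, Finset.mem_erase, Finset.mem_union, Finset.mem_filter,
        Finset.mem_univ, true_and, and_true, ne_eq, Fin.ext_iff]
      omega
    have hdisj : Disjoint s₁ s₂ := by
      rw [Finset.disjoint_left]
      intro j hj1 hj2
      simp only [hs1, hs2, Finset.mem_filter, Finset.mem_univ, true_and] at hj1 hj2
      omega
    have hbound : ∀ s : Finset (Fin (N - 1)),
        (∀ x ∈ s, ∀ y ∈ s, f x = f y → x = y) →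
        (∀ x ∈ s, f x ∈ Finset.Icc 1 N) →
        ∑ j ∈ s, a (f j) ≤ S := by
      intro s hinj hmem
      have h1 : ∑ j ∈ s, a (f j) = ∑ k ∈ s.image f, a k := (Finset.sum_image hinj).symm
      rw [h1, hSdef]
      apply Finset.sum_le_sum_of_subset_of_nonneg
      · intro k hk
        obtain ⟨x, hx, rfl⟩ := Finset.mem_image.mp hk
        exact hmem x hx
      · intro k hk _
        exact hanonneg k hk
    have hb1 : ∑ j ∈ s₁, a (f j) ≤ S := by
      apply hbound
      · intro x hx y hy hxy
        simp only [hs1, Finset.mem_filter, Finset.mem_univ, true_and] at hx hy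
        simp only [hf] at hxy
        apply Fin.ext
        omega
      · intro x hx
        simp only [hs1, Finset.mem_filter, Finset.mem_univ, true_and] at hx
        simp only [hf, Finset.mem_Icc]
        omega
    have hb2 : ∑ j ∈ s₂, a (f j) ≤ S := by
      apply hbound
      · intro x hx y hy hxy
        simp only [hs2, Finset.mem_filter, Finset.mem_univ, true_and] at hx hy
        simp only [hf] at hxy
        apply Fin.ext
        have hx' := x.isLt
        have hy' := y.isLt
        omega
      · intro x hx
        simp only [hs2, Finset.mem_filter, Finset.mem_univ, true_and] at hx
        have hx' := x.isLt
        simp only [hf, Finset.mem_Icc]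
        omega
    calc ∑ j ∈ Finset.univ.erase i, a (f j)
        = ∑ j ∈ s₁, a (f j) + ∑ j ∈ s₂, a (f j) := by
          rw [hsplit, Finset.sum_union hdisj]
      _ ≤ S + S := add_le_add hb1 hb2
      _ = 2 * S := by ring
  -- Row sums are positive
  have hrow : ∀ i : Fin (N - 1), 0 < ∑ j, M i j := by
    intro i
    have h1 : ∑ j, M i j
        = -c * ∑ j : Fin (N - 1), a ((i.val : ℤ) - (j.val : ℤ)).natAbs := by
      simp only [hMdef, Matrix.of_apply, Finset.mul_sum]
    have h2 : ∑ j : Fin (N - 1), a ((i.val : ℤ) - (j.val : ℤ)).natAbs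
        = ∑ j ∈ Finset.univ.erase i, a ((i.val : ℤ) - (j.val : ℤ)).natAbs
          + a ((i.val : ℤ) - (i.val : ℤ)).natAbs :=
      (Finset.sum_erase_add _ _ (Finset.mem_univ i)).symm
    have h3 : ((i.val : ℤ) - (i.val : ℤ)).natAbs = 0 := by omega
    have h4 := hoff i
    rw [h1, h2, h3, ha0]
    nlinarith [hinv, hc]
  -- Entries off the diagonal are nonpositive
  have hMnonpos : ∀ i j : Fin (N - 1), i ≠ j → M i j ≤ 0 := by
    intro i j hij
    have hij' : i.val ≠ j.val := fun h => hij (Fin.ext h)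
    have hi := i.isLt
    have hj := j.isLt
    have hk1 : 1 ≤ ((i.val : ℤ) - (j.val : ℤ)).natAbs := by omega
    have hk2 : ((i.val : ℤ) - (j.val : ℤ)).natAbs ≤ N := by omega
    have := hpos _ hk1 hk2
    simp only [hMdef, Matrix.of_apply]
    nlinarith
  constructor
  · -- Hermitian
    ext i j
    simp only [Matrix.conjTranspose_apply, star_trivial]
    exact hMsymm j i
  · intro x hx
    have hQ : star x ⬝ᵥ M *ᵥ x = ∑ i, ∑ j, M i j * (x i * x j) := by
      simp only [star_trivial, dotProduct, Matrix.mulVec, dotProduct, Finset.mul_sum]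
      apply Finset.sum_congr rfl
      intro i _
      apply Finset.sum_congr rfl
      intro j _
      ring
    have hswap : ∑ i, ∑ j, M i j * x j ^ 2 = ∑ i, ∑ j, M i j * x i ^ 2 := by
      rw [Finset.sum_comm]
      apply Finset.sum_congr rfl
      intro i _
      apply Finset.sum_congr rfl
      intro j _
      rw [hMsymm]
    have hkey : ∑ i, (∑ j, M i j) * x i ^ 2 ≤ ∑ i, ∑ j, M i j * (x i * x j) := by
      have hterm : ∑ i, ∑ j, M i j * (x i ^ 2 + x j ^ 2)
          ≤ ∑ i, ∑ j, 2 * (M i j * (x i * x j)) := by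
        apply Finset.sum_le_sum
        intro i _
        apply Finset.sum_le_sum
        intro j _
        rcases eq_or_ne i j with rfl | hij
        · apply le_of_eq; ring
        · have h1 : M i j ≤ 0 := hMnonpos i j hij
          nlinarith [mul_nonneg (neg_nonneg.2 h1) (sq_nonneg (x i - x j))]
      have hL1 : ∑ i, ∑ j, M i j * (x i ^ 2 + x j ^ 2)
          = 2 * ∑ i, (∑ j, M i j) * x i ^ 2 := by
        have e1 : ∀ i : Fin (N - 1), ∑ j, M i j * (x i ^ 2 + x j ^ 2)
            = (∑ j, M i j * x i ^ 2) + ∑ j, M i j * x j ^ 2 := by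
          intro i
          rw [← Finset.sum_add_distrib]
          apply Finset.sum_congr rfl
          intro j _
          ring
        rw [Finset.sum_congr rfl (fun i _ => e1 i), Finset.sum_add_distrib, hswap]
        have e2 : ∀ i : Fin (N - 1), ∑ j, M i j * x i ^ 2 = (∑ j, M i j) * x i ^ 2 := by
          intro i
          rw [Finset.sum_mul]
        rw [Finset.sum_congr rfl (fun i _ => e2 i)]
        ring
      have hR1 : ∑ i, ∑ j, 2 * (M i j * (x i * x j))
          = 2 * ∑ i, ∑ j, M i j * (x i * x j) := by
        rw [Finset.mul_sum]
        apply Finset.sum_congr rfl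
        intro i _
        rw [Finset.mul_sum]
      rw [hL1, hR1] at hterm
      linarith
    have hposSum : 0 < ∑ i, (∑ j, M i j) * x i ^ 2 := by
      obtain ⟨i₀, hi₀⟩ : ∃ i, x i ≠ 0 := by
        by_contra h; push_neg at h; exact hx (Finsupp.ext h)
      apply Finset.sum_pos'
      · intro i _
        exact mul_nonneg (hrow i).le (sq_nonneg _)
      · exact ⟨i₀, Finset.mem_univ i₀, mul_pos (hrow i₀)
          (lt_of_le_of_ne (sq_nonneg _) (Ne.symm (pow_ne_zero 2 hi₀)))⟩
    have hG : (x.sum fun i xi => x.sum fun j xj => star xi * M i j * xj)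
        = ∑ i, ∑ j, M i j * (x i * x j) := by
      rw [Finsupp.sum_fintype _ _ (by simp)]
      apply Finset.sum_congr rfl; intro i _
      rw [Finsupp.sum_fintype _ _ (by simp)]
      apply Finset.sum_congr rfl; intro j _
      simp only [star_trivial]; ring
    rw [hG]
    exact lt_of_lt_of_le hposSum hkey
end
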